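/- Let A : Fin p → Matrix (Fin n) (Fin n) ℝ be T-symmetric with a T-eigen-decomposition bcirc(A) = bcirc(U) · bcirc(D) · (bcirc U)ᵀ, where bcirc(U) is orthogonal. Then bcirc(A) is invertible if and only if bcirc(D) is invertible, and in that case (bcirc A)⁻¹ = bcirc(U) · (bcirc D)⁻¹ · (bcirc U)ᵀ, and (bcirc A)⁻¹ is a symmetric matrix which is the block circulant matrix of some tensor (the T-inverse A^{-1} is again T-symmetric). -/

import Mathlib

open Matrix

/-- The block circulant matrix of a third order tensor given by its frontal
slices: `bcirc(A) (k,i) (l,j) = (A (k−l)) i j` with block indices in `ℤ/p`. -/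
def bcirc {m n p : ℕ} (A : Fin p → Matrix (Fin m) (Fin n) ℝ) :
    Matrix (Fin p × Fin m) (Fin p × Fin n) ℝ :=
  Matrix.of fun ki lj => A (ki.1 - lj.1) ki.2 lj.2

/-- if `A` is T-symmetric with T-eigen-decomposition
`bcirc(A) = bcirc(U)·bcirc(D)·(bcirc U)ᵀ`, then `bcirc(A)` is invertible iff
`bcirc(D)` is, and in that case
`(bcirc A)⁻¹ = bcirc(U)·(bcirc D)⁻¹·(bcirc U)ᵀ`, `(bcirc A)⁻¹` is symmetric
and equals the block circulant matrix of some tensor. -/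
theorem t_inverse_symmetric (n p : ℕ) (hp : 1 ≤ p)
    (A U D : Fin p → Matrix (Fin n) (Fin n) ℝ)
    (hA : (bcirc A).IsSymm)
    (hU1 : bcirc U * (bcirc U)ᵀ = 1) (hU2 : (bcirc U)ᵀ * bcirc U = 1)
    (hdec : bcirc A = bcirc U * bcirc D * (bcirc U)ᵀ) :
    (IsUnit (bcirc A) ↔ IsUnit (bcirc D)) ∧
    (IsUnit (bcirc A) →
      (bcirc A)⁻¹ = bcirc U * (bcirc D)⁻¹ * (bcirc U)ᵀ ∧
      ((bcirc A)⁻¹).IsSymm ∧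
      ∃ C : Fin p → Matrix (Fin n) (Fin n) ℝ, (bcirc A)⁻¹ = bcirc C) := by
  haveI : NeZero p := ⟨by omega⟩
  have hdetU : IsUnit (bcirc U).det :=
    IsUnit.of_mul_eq_one (bcirc U)ᵀ.det (by rw [← Matrix.det_mul, hU1, Matrix.det_one])
  have hUu : IsUnit (bcirc U) := (Matrix.isUnit_iff_isUnit_det _).mpr hdetU
  have hUTu : IsUnit (bcirc U)ᵀ := (Matrix.isUnit_iff_isUnit_det _).mpr
    (by rwa [Matrix.det_transpose])
  have hD : bcirc D = (bcirc U)ᵀ * bcirc A * bcirc U := by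
    rw [hdec]
    symm
    calc (bcirc U)ᵀ * (bcirc U * bcirc D * (bcirc U)ᵀ) * bcirc U
        = ((bcirc U)ᵀ * bcirc U) * bcirc D * ((bcirc U)ᵀ * bcirc U) := by
          simp only [Matrix.mul_assoc]
      _ = bcirc D := by rw [hU2, Matrix.one_mul, Matrix.mul_one]
  have hiff : IsUnit (bcirc A) ↔ IsUnit (bcirc D) := by
    constructor
    · intro h; rw [hD]; exact (hUTu.mul h).mul hUu
    · intro h; rw [hdec]; exact (hUu.mul h).mul hUTu
  refine ⟨hiff, fun hA_unit => ?_⟩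
  have hD_unit : IsUnit (bcirc D) := hiff.mp hA_unit
  have hDdet : IsUnit (bcirc D).det := (Matrix.isUnit_iff_isUnit_det _).mp hD_unit
  have hAdet : IsUnit (bcirc A).det := (Matrix.isUnit_iff_isUnit_det _).mp hA_unit
  have hinv : (bcirc A)⁻¹ = bcirc U * (bcirc D)⁻¹ * (bcirc U)ᵀ := by
    apply Matrix.inv_eq_left_inv
    rw [hdec]
    calc (bcirc U * (bcirc D)⁻¹ * (bcirc U)ᵀ) * (bcirc U * bcirc D * (bcirc U)ᵀ)
        = bcirc U * ((bcirc D)⁻¹ * (((bcirc U)ᵀ * bcirc U) * bcirc D)) * (bcirc U)ᵀ := by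
          simp only [Matrix.mul_assoc]
      _ = bcirc U * (bcirc U)ᵀ := by
          rw [hU2, Matrix.one_mul, Matrix.nonsing_inv_mul _ hDdet, Matrix.mul_one]
      _ = 1 := hU1
  have hsymm : ((bcirc A)⁻¹).IsSymm := by
    rw [Matrix.IsSymm, Matrix.transpose_nonsing_inv, hA.eq]
  refine ⟨hinv, hsymm, ?_⟩
  -- shift invariance of the inverse
  have hshift : ∀ g : Fin p,
      (bcirc A)⁻¹ = ((bcirc A)⁻¹).submatrix
        ((Equiv.addRight g).prodCongr (Equiv.refl (Fin n)))
        ((Equiv.addRight g).prodCongr (Equiv.refl (Fin n))) := by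
    intro g
    set e := (Equiv.addRight g).prodCongr (Equiv.refl (Fin n)) with he
    have hAe : (bcirc A).submatrix e e = bcirc A := by
      ext ⟨k, i⟩ ⟨l, j⟩
      simp [bcirc, he, Matrix.submatrix_apply, Equiv.prodCongr_apply,
        add_sub_add_right_eq_sub]
    apply Matrix.inv_eq_left_inv
    calc ((bcirc A)⁻¹).submatrix e e * bcirc A
        = ((bcirc A)⁻¹).submatrix e e * (bcirc A).submatrix e e := by rw [hAe]
      _ = ((bcirc A)⁻¹ * bcirc A).submatrix e e := by
          rw [Matrix.submatrix_mul_equiv]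
      _ = (1 : Matrix (Fin p × Fin n) (Fin p × Fin n) ℝ).submatrix e e := by
          rw [Matrix.nonsing_inv_mul _ hAdet]
      _ = 1 := Matrix.submatrix_one_equiv e
  refine ⟨fun g => Matrix.of fun i j => (bcirc A)⁻¹ (g, i) (0, j), ?_⟩
  ext ⟨k, i⟩ ⟨l, j⟩
  have := congrFun (congrFun (hshift l) (k - l, i)) (0, j)
  simp only [Matrix.submatrix_apply, Equiv.prodCongr_apply, Equiv.coe_refl,
    Prod.map, Equiv.coe_addRight, id] at this
  show (bcirc A)⁻¹ (k, i) (l, j) = (bcirc A)⁻¹ (k - l, i) (0, j)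
  rw [this, sub_add_cancel, zero_add]
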